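/- arXiv:1608.07778 — 2 statements merged into one kernel-verified Lean document; each statement's English description precedes it below -/
import Mathlib

section
/- Let G=(V,w,m) be a finite connected weighted graph satisfying CD(K,∞) with K > 0. Then diam_ρ(G) ≤ (2/K)·sup_x √(2 Deg(x)), where diam_ρ is the diameter with respect to the resistance metric ρ. -/
open scoped ENNReal

structure WGraph (V : Type*) where
  w : V → V → ℝ
  m : V → ℝ
  symm : ∀ x y, w x y = w y x
  nonneg : ∀ x y, 0 ≤ w x y
  loopless : ∀ x, w x x = 0
  mpos : ∀ x, 0 < m x
  locfin : ∀ x, {y | w x y ≠ 0}.Finite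

variable {V : Type*}

noncomputable def WGraph.lap (G : WGraph V) (f : V → ℝ) (x : V) : ℝ :=
  (1 / G.m x) * ∑' y, G.w x y * (f y - f x)

noncomputable def WGraph.gamma (G : WGraph V) (f g : V → ℝ) (x : V) : ℝ :=
  (G.lap (f * g) x - f x * G.lap g x - g x * G.lap f x) / 2

noncomputable def WGraph.gamma2 (G : WGraph V) (f : V → ℝ) (x : V) : ℝ :=
  (G.lap (G.gamma f f) x - 2 * G.gamma f (G.lap f) x) / 2

noncomputable def WGraph.deg (G : WGraph V) (x : V) : ℝ :=
  (∑' y, G.w x y) / G.m x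

noncomputable def WGraph.cdist (G : WGraph V) (x y : V) : ℕ∞ :=
  ⨅ (n : ℕ) (_ : ∃ c : ℕ → V, c 0 = x ∧ c n = y ∧ ∀ i < n, 0 < G.w (c i) (c (i+1))), (n : ℕ∞)

noncomputable def WGraph.rho (G : WGraph V) (x y : V) : ℝ≥0∞ :=
  ⨆ (f : V → ℝ) (_ : ∀ z, G.gamma f f z ≤ 1), ENNReal.ofReal (f y - f x)

noncomputable def WGraph.diamd (G : WGraph V) : ℝ≥0∞ := ⨆ x, ⨆ y, (G.cdist x y : ℝ≥0∞)

noncomputable def WGraph.diamrho (G : WGraph V) : ℝ≥0∞ := ⨆ x, ⨆ y, G.rho x y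

def WGraph.Connected (G : WGraph V) : Prop :=
  ∀ x y, ∃ (n : ℕ) (c : ℕ → V), c 0 = x ∧ c n = y ∧ ∀ i < n, 0 < G.w (c i) (c (i+1))

namespace WGraph

open Topology Filter

variable (G : WGraph V) [Fintype V]

lemma lap_eq_sum (f : V → ℝ) (x : V) :
    G.lap f x = (1 / G.m x) * ∑ y, G.w x y * (f y - f x) := by
  rw [lap, tsum_fintype]

lemma deg_eq_sum (x : V) : G.deg x = (∑ y, G.w x y) / G.m x := by
  rw [deg, tsum_fintype]

lemma gamma_eq (f g : V → ℝ) (x : V) :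
    G.gamma f g x = (1 / (2 * G.m x)) * ∑ y, G.w x y * ((f y - f x) * (g y - g x)) := by
  have hm := (G.mpos x).ne'
  have hsum : ∑ y, G.w x y * ((f y - f x) * (g y - g x))
      = (∑ y, G.w x y * (f y * g y - f x * g x)) - f x * ∑ y, G.w x y * (g y - g x)
        - g x * ∑ y, G.w x y * (f y - f x) := by
    rw [Finset.mul_sum, Finset.mul_sum, ← Finset.sum_sub_distrib, ← Finset.sum_sub_distrib]
    exact Finset.sum_congr rfl fun y _ => by ring
  have key : ∀ A B C : ℝ, ((1/G.m x)*A - f x*((1/G.m x)*B) - g x*((1/G.m x)*C))/2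
      = (1/(2*G.m x))*(A - f x*B - g x*C) := by
    intro A B C; field_simp
  rw [gamma, lap_eq_sum, lap_eq_sum, lap_eq_sum, hsum]
  simp only [Pi.mul_apply]
  exact key _ _ _

lemma gamma_self_eq (f : V → ℝ) (x : V) :
    G.gamma f f x = (1 / (2 * G.m x)) * ∑ y, G.w x y * (f y - f x) ^ 2 := by
  rw [gamma_eq]
  congr 1
  exact Finset.sum_congr rfl fun y _ => by ring

lemma gamma_nonneg (f : V → ℝ) (x : V) : 0 ≤ G.gamma f f x := by
  rw [gamma_self_eq]
  have := G.mpos x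
  apply mul_nonneg
  · positivity
  · exact Finset.sum_nonneg fun y _ => mul_nonneg (G.nonneg x y) (sq_nonneg _)

lemma sum_w_sq_eq (f : V → ℝ) (x : V) :
    ∑ y, G.w x y * (f y - f x) ^ 2 = 2 * G.m x * G.gamma f f x := by
  rw [gamma_self_eq]
  have hm : (2 * G.m x) ≠ 0 := by have := G.mpos x; positivity
  field_simp
  rw [mul_div_assoc, div_self (G.mpos x).ne', mul_one]

/-- single edge bound -/
lemma edge_sq_le (f : V → ℝ) (x y : V) :
    G.w x y * (f y - f x) ^ 2 ≤ 2 * G.m x * G.gamma f f x := by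
  rw [← sum_w_sq_eq]
  exact Finset.single_le_sum (f := fun z => G.w x z * (f z - f x) ^ 2)
    (fun z _ => mul_nonneg (G.nonneg x z) (sq_nonneg _)) (Finset.mem_univ y)

lemma deg_nonneg (x : V) : 0 ≤ G.deg x := by
  rw [deg_eq_sum]
  exact div_nonneg (Finset.sum_nonneg fun y _ => G.nonneg x y) (G.mpos x).le

/-- Cauchy-Schwarz: (lap f x)^2 ≤ 2 deg x * Γ f f x -/
lemma lap_sq_le (f : V → ℝ) (x : V) :
    (G.lap f x) ^ 2 ≤ 2 * G.deg x * G.gamma f f x := by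
  have hm := G.mpos x
  have hCS := Finset.sum_mul_sq_le_sq_mul_sq Finset.univ
    (fun y => Real.sqrt (G.w x y)) (fun y => Real.sqrt (G.w x y) * (f y - f x))
  have h1 : ∀ y, Real.sqrt (G.w x y) * (Real.sqrt (G.w x y) * (f y - f x))
      = G.w x y * (f y - f x) := fun y => by
    rw [← mul_assoc, Real.mul_self_sqrt (G.nonneg x y)]
  have h2 : ∀ y, Real.sqrt (G.w x y) ^ 2 = G.w x y := fun y => Real.sq_sqrt (G.nonneg x y)
  have h3 : ∀ y, (Real.sqrt (G.w x y) * (f y - f x)) ^ 2 = G.w x y * (f y - f x) ^ 2 :=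
    fun y => by rw [mul_pow, h2]
  simp only [h1, h2, h3] at hCS
  rw [lap_eq_sum, mul_pow]
  calc (1 / G.m x) ^ 2 * (∑ y, G.w x y * (f y - f x)) ^ 2
      ≤ (1 / G.m x) ^ 2 * ((∑ y, G.w x y) * ∑ y, G.w x y * (f y - f x) ^ 2) := by
        apply mul_le_mul_of_nonneg_left hCS (by positivity)
    _ = 2 * G.deg x * G.gamma f f x := by
        rw [sum_w_sq_eq, deg_eq_sum]
        field_simp

lemma abs_lap_le (f : V → ℝ) (x : V) :
    |G.lap f x| ≤ Real.sqrt (2 * G.deg x) * Real.sqrt (G.gamma f f x) := by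
  rw [← Real.sqrt_mul (by have := G.deg_nonneg x; positivity)]
  exact Real.abs_le_sqrt (G.lap_sq_le f x)

/-- Bochner: 2 Γ(f, Δf) = Δ Γf - 2 Γ₂ f -/
lemma two_gamma_lap (f : V → ℝ) (x : V) :
    2 * G.gamma f (G.lap f) x = G.lap (G.gamma f f) x - 2 * G.gamma2 f x := by
  rw [gamma2]; ring

/-- lap as a linear map -/
noncomputable def lapLM : (V → ℝ) →ₗ[ℝ] (V → ℝ) where
  toFun f := G.lap f
  map_add' f g := by
    ext x
    simp only [Pi.add_apply, lap_eq_sum]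
    rw [← mul_add, ← Finset.sum_add_distrib]
    congr 1
    exact Finset.sum_congr rfl fun y _ => by ring
  map_smul' c f := by
    ext x
    simp only [Pi.smul_apply, smul_eq_mul, lap_eq_sum, RingHom.id_apply]
    conv_rhs => rw [← mul_assoc, mul_comm c (1/G.m x), mul_assoc, Finset.mul_sum]
    congr 1
    exact Finset.sum_congr rfl fun y _ => by ring

noncomputable def lapCLM : (V → ℝ) →L[ℝ] (V → ℝ) :=
  LinearMap.toContinuousLinearMap G.lapLM

@[simp] lemma lapCLM_apply (f : V → ℝ) : G.lapCLM f = G.lap f := rfl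

section Heat

open NormedSpace

noncomputable def heat (f : V → ℝ) (t : ℝ) : V → ℝ :=
  exp (t • G.lapCLM) f

lemma heat_zero (f : V → ℝ) : G.heat f 0 = f := by
  simp [heat, exp_zero]

lemma hasDerivAt_heat (f : V → ℝ) (t : ℝ) (y : V) :
    HasDerivAt (fun s => G.heat f s y) (G.lap (G.heat f t) y) t := by
  have h := hasDerivAt_exp_smul_const' (𝕂 := ℝ) G.lapCLM t
  have h2 : HasDerivAt (fun s => G.heat f s)
      ((G.lapCLM * exp (t • G.lapCLM)) f) t := by
    have h3 := h.clm_apply (hasDerivAt_const t f)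
    simpa [heat] using h3
  have h4 := hasDerivAt_pi.1 h2 y
  have h5 : (G.lapCLM * exp (t • G.lapCLM)) f = G.lap (G.heat f t) := by
    rw [ContinuousLinearMap.mul_apply]; rfl
  rw [h5] at h4
  exact h4

lemma hasDerivAt_gamma_heat (f : V → ℝ) (x : V) (t : ℝ) :
    HasDerivAt (fun s => G.gamma (G.heat f s) (G.heat f s) x)
      (2 * G.gamma (G.heat f t) (G.lap (G.heat f t)) x) t := by
  have hterm : ∀ y : V, HasDerivAt
      (fun s => G.w x y * (G.heat f s y - G.heat f s x) ^ 2)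
      (G.w x y * ((2:ℕ) * (G.heat f t y - G.heat f t x) ^ 1 *
        (G.lap (G.heat f t) y - G.lap (G.heat f t) x))) t := fun y =>
    (((G.hasDerivAt_heat f t y).sub (G.hasDerivAt_heat f t x)).pow 2).const_mul _
  have hsum : HasDerivAt
      (fun s => (1 / (2 * G.m x)) * ∑ y, G.w x y * (G.heat f s y - G.heat f s x) ^ 2)
      ((1 / (2 * G.m x)) * ∑ y, G.w x y * ((2:ℕ) * (G.heat f t y - G.heat f t x) ^ 1 *
        (G.lap (G.heat f t) y - G.lap (G.heat f t) x))) t :=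
    (HasDerivAt.fun_sum fun y _ => hterm y).const_mul _
  have hfun : (fun s => G.gamma (G.heat f s) (G.heat f s) x)
      = fun s => (1 / (2 * G.m x)) * ∑ y, G.w x y * (G.heat f s y - G.heat f s x) ^ 2 := by
    funext s; exact G.gamma_self_eq _ x
  have hval : (1 / (2 * G.m x)) * ∑ y, G.w x y * ((2:ℕ) * (G.heat f t y - G.heat f t x) ^ 1 *
        (G.lap (G.heat f t) y - G.lap (G.heat f t) x))
      = 2 * G.gamma (G.heat f t) (G.lap (G.heat f t)) x := by
    have hs : ∑ y, G.w x y * ((2:ℕ) * (G.heat f t y - G.heat f t x) ^ 1 *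
          (G.lap (G.heat f t) y - G.lap (G.heat f t) x))
        = 2 * ∑ y, G.w x y * ((G.heat f t y - G.heat f t x) *
          (G.lap (G.heat f t) y - G.lap (G.heat f t) x)) := by
      rw [Finset.mul_sum]
      exact Finset.sum_congr rfl fun y _ => by push_cast; ring
    rw [gamma_eq, hs]
    ring
  rw [hfun, ← hval]
  exact hsum

lemma deriv_nonneg_of_isMaxOn_Icc {f : ℝ → ℝ} {f' a t : ℝ} (ht : a < t)
    (hd : HasDerivAt f f' t) (hmax : ∀ s ∈ Set.Icc a t, f s ≤ f t) : 0 ≤ f' := by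
  have hne : (𝓝[Set.Ioo a t] t).NeBot := right_nhdsWithin_Ioo_neBot ht
  have hmono : 𝓝[Set.Ioo a t] t ≤ 𝓝[≠] t :=
    nhdsWithin_mono t (fun s hs => ne_of_lt hs.2)
  refine ge_of_tendsto ((hasDerivAt_iff_tendsto_slope.1 hd).mono_left hmono) ?_
  filter_upwards [self_mem_nhdsWithin] with s hs
  have h1 : f s - f t ≤ 0 := sub_nonpos.2 (hmax s ⟨hs.1.le, hs.2.le⟩)
  have h2 : s - t < 0 := sub_neg.2 hs.2
  rw [slope_def_field, div_eq_mul_inv]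
  have h3 := mul_nonneg (neg_nonneg.2 h1) (neg_nonneg.2 (inv_nonpos.2 h2.le))
  rw [neg_mul_neg] at h3
  exact h3

lemma gamma_heat_le (f : V → ℝ) (K : ℝ) (hK : 0 < K)
    (hCD : ∀ (h : V → ℝ) (z : V), K * G.gamma h h z ≤ G.gamma2 h z)
    (hf : ∀ z, G.gamma f f z ≤ 1) {t : ℝ} (ht : 0 ≤ t) (x : V) :
    G.gamma (G.heat f t) (G.heat f t) x ≤ Real.exp (-(2*K*t)) := by
  set θ : V → ℝ → ℝ :=
    fun z s => Real.exp (2*K*s) * G.gamma (G.heat f s) (G.heat f s) z with hθ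
  suffices H : ∀ ε > (0:ℝ), Real.exp (2*K*t) * G.gamma (G.heat f t) (G.heat f t) x ≤ 1 + ε * t by
    have h1 : Real.exp (2*K*t) * G.gamma (G.heat f t) (G.heat f t) x ≤ 1 := by
      refine le_of_forall_pos_le_add fun δ hδ => ?_
      have hε : (0:ℝ) < δ / (t+1) := div_pos hδ (by linarith)
      have := H _ hε
      have h2 : δ / (t+1) * t ≤ δ := by
        rw [div_mul_eq_mul_div, div_le_iff₀ (by linarith : (0:ℝ) < t+1)]
        nlinarith
      linarith
    rw [Real.exp_neg, ← one_div, le_div_iff₀ (Real.exp_pos _)]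
    linarith [h1, mul_comm (Real.exp (2*K*t)) (G.gamma (G.heat f t) (G.heat f t) x)]
  intro ε hε
  -- θε z s := θ z s - ε s ; we bound its max
  set θε : V → ℝ → ℝ := fun z s => θ z s - ε * s with hθε
  have hderiv : ∀ z s, HasDerivAt (θε z)
      (2*K*Real.exp (2*K*s) * G.gamma (G.heat f s) (G.heat f s) z
        + Real.exp (2*K*s) * (2 * G.gamma (G.heat f s) (G.lap (G.heat f s)) z) - ε) s := by
    intro z s
    have h1 : HasDerivAt (fun s => Real.exp (2*K*s)) (2*K*Real.exp (2*K*s)) s := by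
      have h0 : HasDerivAt (fun s : ℝ => 2*K*s) (2*K) s := by
        simpa using (hasDerivAt_id s).const_mul (2*K)
      have h2 := (Real.hasDerivAt_exp (2*K*s)).comp s h0
      have h5 : Real.exp (2*K*s) * (2*K) = 2*K*Real.exp (2*K*s) := mul_comm _ _
      rw [h5] at h2
      exact h2
    have h3 := (h1.fun_mul (G.hasDerivAt_gamma_heat f z s)).fun_sub ((hasDerivAt_id s).const_mul ε)
    simpa [hθε, hθ, mul_one] using h3
  have hmaxsel : ∀ z, ∃ s₀ ∈ Set.Icc (0:ℝ) t, ∀ s ∈ Set.Icc (0:ℝ) t, θε z s ≤ θε z s₀ := by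
    intro z
    have hc : ContinuousOn (θε z) (Set.Icc 0 t) :=
      (continuous_iff_continuousAt.2 fun s => (hderiv z s).continuousAt).continuousOn
    obtain ⟨s₀, hs₀, hmax⟩ := isCompact_Icc.exists_isMaxOn (Set.nonempty_Icc.2 ht) hc
    exact ⟨s₀, hs₀, fun s hs => hmax hs⟩
  choose s₀ hs₀mem hs₀max using hmaxsel
  obtain ⟨x₀, -, hx₀⟩ := Finset.exists_max_image Finset.univ (fun z => θε z (s₀ z))
    ⟨x, Finset.mem_univ x⟩
  have hglob : ∀ z, ∀ s ∈ Set.Icc (0:ℝ) t, θε z s ≤ θε x₀ (s₀ x₀) := fun z s hs =>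
    (hs₀max z s hs).trans (hx₀ z (Finset.mem_univ z))
  have hfinal : θε x₀ (s₀ x₀) ≤ 1 := by
    by_cases hs0 : s₀ x₀ = 0
    · rw [hs0]
      have : θε x₀ 0 = G.gamma f f x₀ := by
        simp [hθε, hθ, heat_zero]
      rw [this]
      exact hf x₀
    · exfalso
      have hpos : 0 < s₀ x₀ := lt_of_le_of_ne (hs₀mem x₀).1 (Ne.symm hs0)
      set u := s₀ x₀ with hu
      set h : V → ℝ := G.heat f u with hh
      have e_pos := Real.exp_pos (2*K*u)
      have hge : 0 ≤ 2*K*Real.exp (2*K*u) * G.gamma h h x₀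
          + Real.exp (2*K*u) * (2 * G.gamma h (G.lap h) x₀) - ε := by
        refine deriv_nonneg_of_isMaxOn_Icc hpos (hderiv x₀ u) fun s hs => ?_
        exact hs₀max x₀ s ⟨hs.1, hs.2.trans (hs₀mem x₀).2⟩
      have hlapeq : Real.exp (2*K*u) * G.lap (G.gamma h h) x₀
          = (1 / G.m x₀) * ∑ y, G.w x₀ y * (θε y u - θε x₀ u) := by
        rw [lap_eq_sum]
        have hterm : ∀ y, G.w x₀ y * (θε y u - θε x₀ u)
            = Real.exp (2*K*u) * (G.w x₀ y * (G.gamma h h y - G.gamma h h x₀)) := by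
          intro y; simp only [hθε, hθ, hh, hu]; ring
        rw [Finset.sum_congr rfl fun y _ => hterm y, ← Finset.mul_sum]
        ring
      have hlap : Real.exp (2*K*u) * G.lap (G.gamma h h) x₀ ≤ 0 := by
        rw [hlapeq]
        apply mul_nonpos_of_nonneg_of_nonpos
        · have := G.mpos x₀; positivity
        · refine Finset.sum_nonpos fun y _ => mul_nonpos_of_nonneg_of_nonpos (G.nonneg x₀ y) ?_
          exact sub_nonpos.2 (hglob y u (hs₀mem x₀))
      have hcdmul : Real.exp (2*K*u) * (K * G.gamma h h x₀) ≤ Real.exp (2*K*u) * G.gamma2 h x₀ :=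
        mul_le_mul_of_nonneg_left (hCD h x₀) e_pos.le
      have hboch : 2 * G.gamma h (G.lap h) x₀
          = G.lap (G.gamma h h) x₀ - 2 * G.gamma2 h x₀ := G.two_gamma_lap h x₀
      rw [hboch] at hge
      nlinarith [hge, hlap, hcdmul, hε]
  -- conclude
  have := hglob x t ⟨le_refl 0 |>.trans ht, le_refl t⟩
  have h2 : θε x t = Real.exp (2*K*t) * G.gamma (G.heat f t) (G.heat f t) x - ε * t := rfl
  linarith [this, hfinal]

lemma exp_sq_helper (a : ℝ) : Real.exp (-(2*a)) = Real.exp (-a) ^ 2 := by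
  rw [sq, ← Real.exp_add]; ring_nf

lemma sqrt_gamma_heat_le (f : V → ℝ) (K : ℝ) (hK : 0 < K)
    (hCD : ∀ (h : V → ℝ) (z : V), K * G.gamma h h z ≤ G.gamma2 h z)
    (hf : ∀ z, G.gamma f f z ≤ 1) {t : ℝ} (ht : 0 ≤ t) (x : V) :
    Real.sqrt (G.gamma (G.heat f t) (G.heat f t) x) ≤ Real.exp (-(K*t)) := by
  have h := G.gamma_heat_le f K hK hCD hf ht x
  have h2 : Real.exp (-(2*K*t)) = Real.exp (-(K*t)) ^ 2 := by
    have := exp_sq_helper (K*t); rw [← this]; ring_nf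
  calc Real.sqrt (G.gamma (G.heat f t) (G.heat f t) x)
      ≤ Real.sqrt (Real.exp (-(K*t)) ^ 2) := Real.sqrt_le_sqrt (h2 ▸ h)
    _ = Real.exp (-(K*t)) := Real.sqrt_sq (Real.exp_pos _).le

lemma abs_lap_heat_le (f : V → ℝ) (K : ℝ) (hK : 0 < K)
    (hCD : ∀ (h : V → ℝ) (z : V), K * G.gamma h h z ≤ G.gamma2 h z)
    (hf : ∀ z, G.gamma f f z ≤ 1) {t : ℝ} (ht : 0 ≤ t) (z : V) :
    |G.lap (G.heat f t) z| ≤ Real.sqrt (2 * G.deg z) * Real.exp (-(K*t)) := by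
  calc |G.lap (G.heat f t) z|
      ≤ Real.sqrt (2 * G.deg z) * Real.sqrt (G.gamma (G.heat f t) (G.heat f t) z) :=
        G.abs_lap_le _ z
    _ ≤ Real.sqrt (2 * G.deg z) * Real.exp (-(K*t)) := by
        exact mul_le_mul_of_nonneg_left (G.sqrt_gamma_heat_le f K hK hCD hf ht z)
          (Real.sqrt_nonneg _)

/-- drift bound of the heat flow at a vertex -/
lemma heat_drift (f : V → ℝ) (K : ℝ) (hK : 0 < K)
    (hCD : ∀ (h : V → ℝ) (z : V), K * G.gamma h h z ≤ G.gamma2 h z)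
    (hf : ∀ z, G.gamma f f z ≤ 1) {T : ℝ} (hT : 0 ≤ T) (z : V) :
    |G.heat f T z - f z| ≤ Real.sqrt (2 * G.deg z) / K := by
  set C := Real.sqrt (2 * G.deg z) with hC
  have hC0 : 0 ≤ C := Real.sqrt_nonneg _
  have hexpd : ∀ s : ℝ, HasDerivAt (fun s => (C/K) * Real.exp (-(K*s))) (-(C * Real.exp (-(K*s)))) s := by
    intro s
    have h0 : HasDerivAt (fun s : ℝ => -(K*s)) (-K) s := by
      simpa using ((hasDerivAt_id s).const_mul K).fun_neg
    have h2 := ((Real.hasDerivAt_exp (-(K*s))).comp s h0).const_mul (C/K)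
    have h5 : C/K * (Real.exp (-(K*s)) * -K) = -(C * Real.exp (-(K*s))) := by
      field_simp
    rw [h5] at h2
    exact h2
  have habs : ∀ s ∈ Set.Icc 0 T, |G.lap (G.heat f s) z| ≤ C * Real.exp (-(K*s)) :=
    fun s hs => G.abs_lap_heat_le f K hK hCD hf hs.1 z
  -- two monotone functions
  have mono : ∀ σ : ℝ, σ = 1 ∨ σ = -1 →
      MonotoneOn (fun s => σ * G.heat f s z - (C/K) * Real.exp (-(K*s))) (Set.Icc 0 T) := by
    intro σ hσ
    have hder : ∀ s : ℝ, HasDerivAt (fun s => σ * G.heat f s z - (C/K) * Real.exp (-(K*s)))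
        (σ * G.lap (G.heat f s) z + C * Real.exp (-(K*s))) s := by
      intro s
      have h1 := ((G.hasDerivAt_heat f s z).const_mul σ).fun_sub (hexpd s)
      simpa [sub_neg_eq_add] using h1
    apply monotoneOn_of_deriv_nonneg (convex_Icc 0 T)
    · exact (continuous_iff_continuousAt.2 fun s => (hder s).continuousAt).continuousOn
    · intro s hs
      exact (hder s).differentiableAt.differentiableWithinAt
    · intro s hs
      rw [interior_Icc] at hs
      rw [(hder s).deriv]
      have h2 := habs s ⟨hs.1.le, hs.2.le⟩
      have h3 : |σ * G.lap (G.heat f s) z| = |G.lap (G.heat f s) z| := by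
        rcases hσ with h | h <;> rw [h] <;> simp
      have h4 := neg_abs_le (σ * G.lap (G.heat f s) z)
      rw [h3] at h4
      linarith
  have hKpos := hK
  have hmem0 : (0:ℝ) ∈ Set.Icc (0:ℝ) T := ⟨le_refl 0, hT⟩
  have hmemT : T ∈ Set.Icc (0:ℝ) T := ⟨hT, le_refl T⟩
  have hexpT : Real.exp (-(K*T)) ≤ 1 := by
    rw [Real.exp_le_one_iff]
    have : 0 ≤ K*T := mul_nonneg hK.le hT
    linarith
  have hexpTpos := (Real.exp_pos (-(K*T))).le
  have hCK : 0 ≤ C / K := div_nonneg hC0 hK.le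
  rw [abs_le]
  constructor
  · have h1 := mono 1 (Or.inl rfl) hmem0 hmemT hmemT.1
    simp only [one_mul, heat_zero, mul_zero, neg_zero, Real.exp_zero, mul_one] at h1
    linarith [mul_nonneg hCK hexpTpos]
  · have h1 := mono (-1) (Or.inr rfl) hmem0 hmemT hmemT.1
    simp only [neg_one_mul, heat_zero, mul_zero, neg_zero, Real.exp_zero, mul_one] at h1
    linarith [mul_nonneg hCK hexpTpos]

/-- oscillation along an edge -/
lemma heat_edge_osc (f : V → ℝ) (K : ℝ) (hK : 0 < K)
    (hCD : ∀ (h : V → ℝ) (z : V), K * G.gamma h h z ≤ G.gamma2 h z)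
    (hf : ∀ z, G.gamma f f z ≤ 1) {T : ℝ} (hT : 0 ≤ T) {x y : V} (hw : 0 < G.w x y) :
    |G.heat f T y - G.heat f T x| ≤ Real.sqrt (2 * G.m x / G.w x y) * Real.exp (-(K*T)) := by
  have h1 := G.edge_sq_le (G.heat f T) x y
  have h2 := G.gamma_heat_le f K hK hCD hf hT x
  have hm := G.mpos x
  have h3 : (G.heat f T y - G.heat f T x) ^ 2
      ≤ (2 * G.m x / G.w x y) * Real.exp (-(2*K*T)) := by
    rw [div_mul_eq_mul_div, le_div_iff₀ hw]
    have h4 : 2 * G.m x * G.gamma (G.heat f T) (G.heat f T) x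
        ≤ 2 * G.m x * Real.exp (-(2*K*T)) :=
      mul_le_mul_of_nonneg_left h2 (by positivity)
    calc (G.heat f T y - G.heat f T x) ^ 2 * G.w x y
        = G.w x y * (G.heat f T y - G.heat f T x) ^ 2 := by ring
      _ ≤ 2 * G.m x * G.gamma (G.heat f T) (G.heat f T) x := h1
      _ ≤ 2 * G.m x * Real.exp (-(2*K*T)) := h4
  calc |G.heat f T y - G.heat f T x|
      = Real.sqrt ((G.heat f T y - G.heat f T x) ^ 2) := (Real.sqrt_sq_eq_abs _).symm
    _ ≤ Real.sqrt ((2 * G.m x / G.w x y) * Real.exp (-(2*K*T))) := Real.sqrt_le_sqrt h3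
    _ = Real.sqrt (2 * G.m x / G.w x y) * Real.sqrt (Real.exp (-(2*K*T))) :=
        Real.sqrt_mul (by positivity) _
    _ = Real.sqrt (2 * G.m x / G.w x y) * Real.exp (-(K*T)) := by
        rw [show -(2*K*T) = -(2*(K*T)) by ring, exp_sq_helper,
          Real.sqrt_sq (Real.exp_pos _).le]

/-- main pointwise bound -/
lemma pointwise_bound (hconn : ∀ x y : V, ∃ (n : ℕ) (c : ℕ → V), c 0 = x ∧ c n = y ∧
      ∀ i < n, 0 < G.w (c i) (c (i+1)))
    (K : ℝ) (hK : 0 < K)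
    (hCD : ∀ (h : V → ℝ) (z : V), K * G.gamma h h z ≤ G.gamma2 h z)
    (f : V → ℝ) (hf : ∀ z, G.gamma f f z ≤ 1) (x y : V) :
    f y - f x ≤ (2 / K) * ⨆ z, Real.sqrt (2 * G.deg z) := by
  set D := (⨆ z, Real.sqrt (2 * G.deg z)) with hD
  have hbdd : BddAbove (Set.range fun z : V => Real.sqrt (2 * G.deg z)) :=
    (Set.finite_range _).bddAbove
  have hDz : ∀ z, Real.sqrt (2 * G.deg z) ≤ D := fun z => le_ciSup hbdd z
  obtain ⟨n, c, hc0, hcn, hcw⟩ := hconn x y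
  set B := ∑ i ∈ Finset.range n, Real.sqrt (2 * G.m (c i) / G.w (c i) (c (i+1))) with hB
  have hB0 : 0 ≤ B := Finset.sum_nonneg fun i _ => Real.sqrt_nonneg _
  have key : ∀ T : ℝ, 0 ≤ T → f y - f x ≤ (2/K) * D + B * Real.exp (-(K*T)) := by
    intro T hT
    have hdx := G.heat_drift f K hK hCD hf hT x
    have hdy := G.heat_drift f K hK hCD hf hT y
    have htel : G.heat f T y - G.heat f T x
        = ∑ i ∈ Finset.range n, (G.heat f T (c (i+1)) - G.heat f T (c i)) := by
      rw [Finset.sum_range_sub (fun i => G.heat f T (c i)), hc0, hcn]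
    have hstep : ∀ i ∈ Finset.range n,
        G.heat f T (c (i+1)) - G.heat f T (c i)
          ≤ Real.sqrt (2 * G.m (c i) / G.w (c i) (c (i+1))) * Real.exp (-(K*T)) := by
      intro i hi
      have := G.heat_edge_osc f K hK hCD hf hT (hcw i (Finset.mem_range.1 hi))
      exact (le_abs_self _).trans this
    have hsum : G.heat f T y - G.heat f T x ≤ B * Real.exp (-(K*T)) := by
      rw [htel, hB, Finset.sum_mul]
      exact Finset.sum_le_sum hstep
    have h1 : f y - G.heat f T y ≤ Real.sqrt (2 * G.deg y) / K := by
      have := abs_le.1 hdy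
      linarith [this.1]
    have h2 : G.heat f T x - f x ≤ Real.sqrt (2 * G.deg x) / K := by
      have := abs_le.1 hdx
      linarith [this.2]
    have hDx' : Real.sqrt (2 * G.deg x) / K ≤ D / K :=
      div_le_div_of_nonneg_right (hDz x) hK.le
    have hDy' : Real.sqrt (2 * G.deg y) / K ≤ D / K :=
      div_le_div_of_nonneg_right (hDz y) hK.le
    have : (2/K) * D = D/K + D/K := by field_simp; ring
    linarith
  have hlim : Filter.Tendsto (fun T : ℝ => (2/K) * D + B * Real.exp (-(K*T)))
      Filter.atTop (𝓝 ((2/K) * D + B * 0)) := by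
    apply Filter.Tendsto.add tendsto_const_nhds
    apply Filter.Tendsto.const_mul
    have h1 : Filter.Tendsto (fun T : ℝ => K * T) Filter.atTop Filter.atTop :=
      Filter.Tendsto.const_mul_atTop hK Filter.tendsto_id
    exact Real.tendsto_exp_neg_atTop_nhds_zero.comp h1
  have := ge_of_tendsto hlim (Filter.eventually_atTop.2 ⟨0, fun T hT => key T hT⟩)
  simpa using this

end Heat

end WGraph

/-- finite connected graph, CD(K,∞), K>0 ⟹ diam_ρ ≤ (2/K)·sup_x √(2 Deg x). -/
theorem diamrho_le_of_CD_finite (G : WGraph V) [Fintype V] [Nonempty V]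
    (hconn : G.Connected) (K : ℝ) (hK : 0 < K)
    (hCD : ∀ (f : V → ℝ) (x : V), K * G.gamma f f x ≤ G.gamma2 f x) :
    G.diamrho ≤ ENNReal.ofReal ((2 / K) * ⨆ x, Real.sqrt (2 * G.deg x)) := by
  rw [WGraph.diamrho]
  refine iSup_le fun x => iSup_le fun y => ?_
  rw [WGraph.rho]
  refine iSup_le fun f => iSup_le fun hf => ?_
  exact ENNReal.ofReal_le_ofReal (G.pointwise_bound hconn K hK (fun h z => hCD h z) f hf x y)
end

section
/- Let G=(V,w,m) be a finite connected weighted graph satisfying CD(K,n) with K > 0 and n < ∞ and suppose 𝔇 < ∞. Then the combinatorial diameter satisfies diam_d(G) ≤ π√(𝔇 n/(2K)). -/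
open scoped ENNReal

variable {V : Type*}

section Basic
variable [Fintype V] (G : WGraph V)

lemma lap_eq_sum (f : V → ℝ) (x : V) :
    G.lap f x = (1 / G.m x) * ∑ y, G.w x y * (f y - f x) := by
  rw [WGraph.lap, tsum_fintype]

lemma gamma_eq_sum (f g : V → ℝ) (x : V) :
    G.gamma f g x = (1 / (2 * G.m x)) * ∑ y, G.w x y * ((f y - f x) * (g y - g x)) := by
  rw [WGraph.gamma, lap_eq_sum, lap_eq_sum, lap_eq_sum]
  simp only [Finset.mul_sum, ← Finset.sum_sub_distrib, Pi.mul_apply]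
  rw [Finset.sum_div]
  refine Finset.sum_congr rfl fun y _ => ?_
  have hm := (G.mpos x).ne'
  field_simp
  ring

end Basic

section Op
variable [Fintype V] (G : WGraph V)

noncomputable def WGraph.lapL : (V → ℝ) →ₗ[ℝ] (V → ℝ) where
  toFun f := G.lap f
  map_add' f g := by
    funext x
    have h : ∀ y, G.w x y * (f y + g y - (f x + g x))
        = G.w x y * (f y - f x) + G.w x y * (g y - g x) := fun y => by ring
    simp only [lap_eq_sum, Pi.add_apply, h, Finset.sum_add_distrib, mul_add]
  map_smul' c f := by
    funext x
    have h : ∀ y, G.w x y * (c * f y - c * f x) = c * (G.w x y * (f y - f x)) :=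
      fun y => by ring
    simp only [lap_eq_sum, Pi.smul_apply, smul_eq_mul, RingHom.id_apply, h, ← Finset.mul_sum]
    ring

noncomputable def WGraph.lapCLM_s17 : (V → ℝ) →L[ℝ] (V → ℝ) :=
  LinearMap.toContinuousLinearMap G.lapL

@[simp] lemma lapCLM_apply (f : V → ℝ) : G.lapCLM_s17 f = G.lap f := rfl

noncomputable def WGraph.P (t : ℝ) : (V → ℝ) →L[ℝ] (V → ℝ) :=
  NormedSpace.exp (t • G.lapCLM_s17)

set_option synthInstance.maxHeartbeats 1000000 in
lemma P_zero : G.P 0 = 1 := by simp [WGraph.P, NormedSpace.exp_zero]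

set_option synthInstance.maxHeartbeats 1000000 in
lemma P_add (s t : ℝ) : G.P (s + t) = G.P s * G.P t := by
  rw [WGraph.P, add_smul]
  exact NormedSpace.exp_add_of_commute_of_mem_ball (𝕂 := ℝ) (Commute.smul_left (Commute.smul_right rfl t) s)
    ((NormedSpace.expSeries_radius_eq_top ℝ ((V → ℝ) →L[ℝ] (V → ℝ))).symm ▸ edist_lt_top _ _) ((NormedSpace.expSeries_radius_eq_top ℝ ((V → ℝ) →L[ℝ] (V → ℝ))).symm ▸ edist_lt_top _ _)

set_option synthInstance.maxHeartbeats 1000000 in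
lemma P_comm_lap (t : ℝ) : G.P t * G.lapCLM_s17 = G.lapCLM_s17 * G.P t := by
  have h : Commute (t • G.lapCLM_s17) G.lapCLM_s17 := Commute.smul_left rfl t
  exact h.exp_left

end Op

section Pos
variable [Fintype V] (G : WGraph V)

noncomputable def evalA (f : V → ℝ) (x : V) :
    ((V → ℝ) →L[ℝ] (V → ℝ)) →L[ℝ] ℝ :=
  (ContinuousLinearMap.proj x).comp (ContinuousLinearMap.apply ℝ (V → ℝ) f)

@[simp] lemma evalA_apply (f : V → ℝ) (x : V) (A : (V → ℝ) →L[ℝ] (V → ℝ)) :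
    evalA f x A = A f x := rfl

lemma lap_one : G.lapCLM_s17 1 = 0 := by
  ext x
  simp [lap_eq_sum]

set_option synthInstance.maxHeartbeats 1000000 in
lemma P_one (t : ℝ) : G.P t 1 = 1 := by
  have hsum := NormedSpace.expSeries_summable' (𝕂 := ℝ) (t • G.lapCLM_s17)
  have h1 : ∀ n : ℕ, 0 < n → ((t • G.lapCLM_s17) ^ n) (1 : V → ℝ) = 0 := by
    intro n hn
    induction n with
    | zero => omega
    | succ k ih =>
      rw [pow_succ, ContinuousLinearMap.mul_apply]
      have : (t • G.lapCLM_s17) (1 : V → ℝ) = 0 := by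
        rw [ContinuousLinearMap.smul_apply, lap_one, smul_zero]
      rcases Nat.eq_zero_or_pos k with hk | hk
      · subst hk; simpa using this
      · rw [this]; exact map_zero _
  have key : G.P t (1 : V → ℝ) = ∑' n : ℕ, ((Nat.factorial n : ℝ)⁻¹ • ((t • G.lapCLM_s17) ^ n)) (1 : V → ℝ) := by
    rw [WGraph.P, NormedSpace.exp_eq_tsum ℝ]
    exact ((ContinuousLinearMap.apply ℝ (V → ℝ) (1 : V → ℝ)).map_tsum hsum)
  rw [key, tsum_eq_single 0]
  · simp
  · intro n hn
    have := h1 n (Nat.pos_of_ne_zero hn)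
    simp [this]

end Pos

section Pos2
variable [Fintype V] (G : WGraph V)

lemma deg_eq_sum (x : V) : G.deg x = (∑ y, G.w x y) / G.m x := by
  rw [WGraph.deg, tsum_fintype]

lemma Qpos (c : ℝ) (hc : ∀ x, G.deg x ≤ c) (f : V → ℝ) (hf : ∀ z, 0 ≤ f z) (z : V) :
    0 ≤ (G.lapCLM_s17 + c • (1 : (V → ℝ) →L[ℝ] (V → ℝ))) f z := by
  have hm := G.mpos z
  have hsplit : ∀ y, G.w z y * (f y - f z) = G.w z y * f y - G.w z y * f z := fun y => by ring
  have : (G.lapCLM_s17 + c • (1 : (V → ℝ) →L[ℝ] (V → ℝ))) f z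
      = (1 / G.m z) * ∑ y, G.w z y * f y + (c - G.deg z) * f z := by
    simp only [ContinuousLinearMap.add_apply, ContinuousLinearMap.smul_apply,
      ContinuousLinearMap.one_apply, Pi.add_apply, Pi.smul_apply, smul_eq_mul,
      lapCLM_apply, lap_eq_sum, deg_eq_sum, hsplit, Finset.sum_sub_distrib,
      ← Finset.sum_mul]
    field_simp
    ring
  rw [this]
  have h1 : 0 ≤ (1 / G.m z) * ∑ y, G.w z y * f y :=
    mul_nonneg (by positivity) (Finset.sum_nonneg fun y _ => mul_nonneg (G.nonneg z y) (hf y))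
  have h2 : 0 ≤ (c - G.deg z) * f z := mul_nonneg (by linarith [hc z]) (hf z)
  linarith

set_option synthInstance.maxHeartbeats 1000000 in
lemma P_nonneg (c : ℝ) (hc : ∀ x, G.deg x ≤ c) (t : ℝ) (ht : 0 ≤ t)
    (f : V → ℝ) (hf : ∀ z, 0 ≤ f z) (x : V) : 0 ≤ G.P t f x := by
  set Q : (V → ℝ) →L[ℝ] (V → ℝ) := G.lapCLM_s17 + c • 1 with hQ
  have hdec : t • G.lapCLM_s17 = (-(t * c)) • (1 : (V → ℝ) →L[ℝ] (V → ℝ)) + t • Q := by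
    rw [hQ]; rw [smul_add, smul_smul]; module
  have hcomm : Commute ((-(t * c)) • (1 : (V → ℝ) →L[ℝ] (V → ℝ))) (t • Q) :=
    Commute.smul_left (Commute.smul_right (Commute.one_left Q) t) _
  have hsplit : G.P t = Real.exp (-(t * c)) • NormedSpace.exp (t • Q) := by
    rw [WGraph.P, hdec, NormedSpace.exp_add_of_commute_of_mem_ball (𝕂 := ℝ) hcomm ((NormedSpace.expSeries_radius_eq_top ℝ ((V → ℝ) →L[ℝ] (V → ℝ))).symm ▸ edist_lt_top _ _) ((NormedSpace.expSeries_radius_eq_top ℝ ((V → ℝ) →L[ℝ] (V → ℝ))).symm ▸ edist_lt_top _ _)]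
    have h1 : ((-(t * c)) • (1 : (V → ℝ) →L[ℝ] (V → ℝ)))
        = algebraMap ℝ ((V → ℝ) →L[ℝ] (V → ℝ)) (-(t * c)) := by
      rw [Algebra.algebraMap_eq_smul_one]
    rw [h1, ← NormedSpace.algebraMap_exp_comm, Algebra.algebraMap_eq_smul_one,
      ← Real.exp_eq_exp_ℝ, smul_mul_assoc, one_mul]
  have hQn : ∀ (k : ℕ) (g : V → ℝ), (∀ z, 0 ≤ g z) → ∀ z, 0 ≤ (Q ^ k) g z := by
    intro k
    induction k with
    | zero => intro g hg z; simpa using hg z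
    | succ j ih =>
      intro g hg z
      rw [pow_succ, ContinuousLinearMap.mul_apply]
      exact ih (Q g) (fun u => Qpos G c hc g hg u) z
  have hsum := NormedSpace.expSeries_summable' (𝕂 := ℝ) (t • Q)
  have hexpQ : NormedSpace.exp (t • Q) f x
      = ∑' k : ℕ, ((Nat.factorial k : ℝ)⁻¹ • ((t • Q) ^ k)) f x := by
    rw [NormedSpace.exp_eq_tsum ℝ]
    exact (evalA f x).map_tsum hsum
  rw [hsplit]
  simp only [ContinuousLinearMap.smul_apply, Pi.smul_apply, smul_eq_mul]
  refine mul_nonneg (Real.exp_nonneg _) ?_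
  rw [hexpQ]
  refine tsum_nonneg fun k => ?_
  have : ((t • Q) ^ k) = (t ^ k) • (Q ^ k) := smul_pow t Q k
  rw [ContinuousLinearMap.smul_apply, this]
  simp only [ContinuousLinearMap.smul_apply, Pi.smul_apply, smul_eq_mul]
  have := hQn k f hf x
  positivity

end Pos2

section Mono
variable [Fintype V] (G : WGraph V)

lemma P_mono (c : ℝ) (hc : ∀ x, G.deg x ≤ c) (t : ℝ) (ht : 0 ≤ t) {f g : V → ℝ} (hfg : ∀ z, f z ≤ g z) (x : V) :
    G.P t f x ≤ G.P t g x := by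
  have h := P_nonneg G c hc t ht (g - f) (fun z => by simpa using sub_nonneg.2 (hfg z)) x
  rw [map_sub] at h
  simpa [sub_nonneg] using h

lemma P_le_one (c : ℝ) (hc : ∀ x, G.deg x ≤ c) (t : ℝ) (ht : 0 ≤ t) {f : V → ℝ} (hf : ∀ z, f z ≤ 1) (x : V) :
    G.P t f x ≤ 1 := by
  have h := P_mono G c hc t ht hf x
  have h2 : (G.P t) (fun _ : V => (1:ℝ)) x = 1 := by
    have : (fun _ : V => (1:ℝ)) = (1 : V → ℝ) := rfl
    rw [this, P_one]; rfl
  rw [h2] at h; exact h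

lemma P_jensen (c : ℝ) (hc : ∀ x, G.deg x ≤ c) (t : ℝ) (ht : 0 ≤ t) (f : V → ℝ) (x : V) :
    (G.P t f x) ^ 2 ≤ G.P t (fun z => f z ^ 2) x := by
  set a : ℝ := G.P t f x with ha
  have key : (fun z => f z ^ 2) = (f * f - (2 * a) • f + (a ^ 2) • (1 : V → ℝ))
      + ((2 * a) • f - (a ^ 2) • (1 : V → ℝ)) := by
    funext z; simp [Pi.add_apply, Pi.sub_apply, Pi.smul_apply, Pi.mul_apply]; ring
  have hpos : ∀ z, 0 ≤ (f * f - (2 * a) • f + (a ^ 2) • (1 : V → ℝ)) z := by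
    intro z
    have : (f * f - (2 * a) • f + (a ^ 2) • (1 : V → ℝ)) z = (f z - a) ^ 2 := by
      simp [Pi.add_apply, Pi.sub_apply, Pi.smul_apply, Pi.mul_apply]; ring
    rw [this]; positivity
  have h1 := P_nonneg G c hc t ht _ hpos x
  rw [key, map_add, map_sub, map_smul, map_smul]
  simp only [Pi.add_apply, Pi.sub_apply, Pi.smul_apply, smul_eq_mul, P_one, Pi.one_apply]
  nlinarith [h1]

end Mono

section GammaFacts
variable [Fintype V] (G : WGraph V)

lemma gamma_self_eq_sum (f : V → ℝ) (x : V) :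
    G.gamma f f x = (1 / (2 * G.m x)) * ∑ y, G.w x y * (f y - f x) ^ 2 := by
  rw [gamma_eq_sum]
  congr 1
  exact Finset.sum_congr rfl fun y _ => by ring

lemma gamma_nonneg (f : V → ℝ) (x : V) : 0 ≤ G.gamma f f x := by
  rw [gamma_self_eq_sum]
  have hm := G.mpos x
  refine mul_nonneg (by positivity) (Finset.sum_nonneg fun y _ => ?_)
  exact mul_nonneg (G.nonneg x y) (by positivity)

lemma gamma_smul (a : ℝ) (f : V → ℝ) (x : V) :
    G.gamma (a • f) (a • f) x = a ^ 2 * G.gamma f f x := by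
  rw [gamma_self_eq_sum, gamma_self_eq_sum, Finset.mul_sum, Finset.mul_sum, Finset.mul_sum]
  refine Finset.sum_congr rfl fun y _ => ?_
  simp only [Pi.smul_apply, smul_eq_mul]
  ring

lemma edge_bound {f : V → ℝ} (hf : ∀ z, G.gamma f f z ≤ 1) {u v : V} (huv : 0 < G.w u v) :
    (f v - f u) ^ 2 ≤ 2 * G.m u / G.w u v := by
  have hm := G.mpos u
  have h := hf u
  rw [gamma_self_eq_sum] at h
  have hsingle : G.w u v * (f v - f u) ^ 2 ≤ ∑ y, G.w u y * (f y - f u) ^ 2 :=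
    Finset.single_le_sum (f := fun y => G.w u y * (f y - f u) ^ 2)
      (fun y _ => mul_nonneg (G.nonneg u y) (by positivity)) (Finset.mem_univ v)
  have hsum : ∑ y, G.w u y * (f y - f u) ^ 2 ≤ 2 * G.m u := by
    have h2 : (1 / (2 * G.m u)) * ∑ y, G.w u y * (f y - f u) ^ 2 ≤ 1 := h
    calc ∑ y, G.w u y * (f y - f u) ^ 2
        = (2 * G.m u) * ((1 / (2 * G.m u)) * ∑ y, G.w u y * (f y - f u) ^ 2) := by
          field_simp
      _ ≤ (2 * G.m u) * 1 := by
          exact mul_le_mul_of_nonneg_left h2 (by positivity)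
      _ = 2 * G.m u := mul_one _
  rw [le_div_iff₀ huv, mul_comm]
  linarith

end GammaFacts

section Deriv
variable [Fintype V] (G : WGraph V)

set_option synthInstance.maxHeartbeats 1000000 in
lemma hasDerivAt_expOp (t : ℝ) :
    HasDerivAt (fun s : ℝ => G.P s) (G.lapCLM_s17 * G.P t) t := by
  have := hasDerivAt_exp_smul_const' (𝕂 := ℝ) G.lapCLM_s17 t
  simpa [WGraph.P] using this

lemma hasDerivAt_P (f : V → ℝ) (t : ℝ) :
    HasDerivAt (fun s : ℝ => G.P s f) (G.lapCLM_s17 (G.P t f)) t := by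
  have h := (hasDerivAt_expOp G t).clm_apply (hasDerivAt_const t f)
  simpa [ContinuousLinearMap.mul_apply] using h

lemma hasDerivAt_g (f : V → ℝ) (T t : ℝ) :
    HasDerivAt (fun s : ℝ => G.P (T - s) f) (-(G.lapCLM_s17 (G.P (T - t) f))) t := by
  have hinner : HasDerivAt (fun s : ℝ => T - s) (-1) t := by
    simpa using (hasDerivAt_id t).const_sub T
  have houter := hasDerivAt_P G f (T - t)
  have := houter.scomp t hinner
  simpa [neg_smul, one_smul, Function.comp_def] using this

lemma hasDerivAt_gamma_g (f : V → ℝ) (T t : ℝ) :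
    HasDerivAt (fun s : ℝ => G.gamma (G.P (T - s) f) (G.P (T - s) f))
      ((-2 : ℝ) • G.gamma (G.P (T - t) f) (G.lap (G.P (T - t) f))) t := by
  rw [hasDerivAt_pi]
  intro z
  have hcoord : ∀ y : V, HasDerivAt (fun s : ℝ => G.P (T - s) f y)
      (-(G.lap (G.P (T - t) f) y)) t := by
    intro y
    have h := hasDerivAt_g G f T t
    have := hasDerivAt_pi.1 h y
    simpa using this
  have hsum : HasDerivAt
      (fun s : ℝ => ∑ y, G.w z y * (G.P (T - s) f y - G.P (T - s) f z) ^ 2)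
      (∑ y, G.w z y * (2 * (G.P (T - t) f y - G.P (T - t) f z)
        * (-(G.lap (G.P (T - t) f) y) - -(G.lap (G.P (T - t) f) z)))) t := by
    refine HasDerivAt.fun_sum fun y _ => ?_
    have hdiff : HasDerivAt (fun s : ℝ => G.P (T - s) f y - G.P (T - s) f z)
        (-(G.lap (G.P (T - t) f) y) - -(G.lap (G.P (T - t) f) z)) t :=
      (hcoord y).sub (hcoord z)
    have hsq := hdiff.pow 2
    have := hsq.const_mul (G.w z y)
    refine this.congr_deriv (Eq.symm ?_)
    ring
  have hfun : (fun s : ℝ => G.gamma (G.P (T - s) f) (G.P (T - s) f) z)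
      = fun s : ℝ => (1 / (2 * G.m z)) *
        ∑ y, G.w z y * (G.P (T - s) f y - G.P (T - s) f z) ^ 2 := by
    funext s; rw [gamma_self_eq_sum]
  have hmain := hsum.const_mul (1 / (2 * G.m z))
  have : HasDerivAt (fun s : ℝ => G.gamma (G.P (T - s) f) (G.P (T - s) f) z)
      ((1 / (2 * G.m z)) * ∑ y, G.w z y * (2 * (G.P (T - t) f y - G.P (T - t) f z)
        * (-(G.lap (G.P (T - t) f) y) - -(G.lap (G.P (T - t) f) z)))) t := by
    rw [hfun]; exact hmain
  refine this.congr_deriv (Eq.symm ?_)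
  simp only [Pi.smul_apply, smul_eq_mul, gamma_eq_sum, Finset.mul_sum]
  refine Finset.sum_congr rfl fun y _ => ?_
  ring

end Deriv

section Phi
variable [Fintype V] (G : WGraph V)

set_option synthInstance.maxHeartbeats 1000000 in
lemma hasDerivAt_Phi (f : V → ℝ) (T t : ℝ) (x : V) :
    HasDerivAt (fun s : ℝ => G.P s (G.gamma (G.P (T - s) f) (G.P (T - s) f)) x)
      (G.P t ((2 : ℝ) • G.gamma2 (G.P (T - t) f)) x) t := by
  have hc := hasDerivAt_expOp G t
  have hu := hasDerivAt_gamma_g G f T t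
  have h := hc.clm_apply hu
  have hx := hasDerivAt_pi.1 h x
  have heq : ((G.lapCLM_s17 * G.P t) (G.gamma (G.P (T - t) f) (G.P (T - t) f))
      + (G.P t) ((-2 : ℝ) • G.gamma (G.P (T - t) f) (G.lap (G.P (T - t) f)))) x
      = G.P t ((2 : ℝ) • G.gamma2 (G.P (T - t) f)) x := by
    rw [← P_comm_lap, ContinuousLinearMap.mul_apply, ← map_add]
    have harg : G.lapCLM_s17 (G.gamma (G.P (T - t) f) (G.P (T - t) f))
        + (-2 : ℝ) • G.gamma (G.P (T - t) f) (G.lap (G.P (T - t) f))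
        = (2 : ℝ) • G.gamma2 (G.P (T - t) f) := by
      funext z
      simp only [Pi.add_apply, Pi.smul_apply, smul_eq_mul, lapCLM_apply, WGraph.gamma2]
      ring
    rw [harg]
  rw [← heq]
  exact hx

end Phi

section Core
variable [Fintype V] (G : WGraph V)

lemma core_est (c : ℝ) (hc : ∀ x, G.deg x ≤ c) (K n : ℝ) (hK : 0 < K) (hn : 0 < n)
    (hCD : ∀ (f : V → ℝ) (x : V),
      (1 / n) * (G.lap f x) ^ 2 + K * G.gamma f f x ≤ G.gamma2 f x)
    (f : V → ℝ) (hf : ∀ z, G.gamma f f z ≤ 1) (T : ℝ) (hT : 0 < T) (x : V) :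
    G.gamma (G.P T f) (G.P T f) x ≤ Real.exp (-(2 * K * T)) ∧
    (G.lap (G.P T f) x) ^ 2 * (Real.exp (2 * K * T) - 1) ≤ n * K := by
  set C : ℝ := (G.lap (G.P T f) x) ^ 2 with hC
  have hC0 : 0 ≤ C := sq_nonneg _
  set Φ : ℝ → ℝ := fun s => G.P s (G.gamma (G.P (T - s) f) (G.P (T - s) f)) x with hΦ
  set ψ : ℝ → ℝ := fun s => Real.exp (-(2 * K * s)) * (Φ s + C / (n * K)) with hψ
  -- lower bound for the derivative of Φ
  have hlow : ∀ t : ℝ, 0 ≤ t →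
      2 * K * Φ t + (2 / n) * C ≤ G.P t ((2 : ℝ) • G.gamma2 (G.P (T - t) f)) x := by
    intro t ht
    set g : V → ℝ := G.P (T - t) f with hg
    have hpoint : ∀ z, ((2 / n) • (fun u => (G.lap g u) ^ 2) + (2 * K) • G.gamma g g) z
        ≤ ((2 : ℝ) • G.gamma2 g) z := by
      intro z
      have := hCD g z
      simp only [Pi.add_apply, Pi.smul_apply, smul_eq_mul]
      have h2 : 2 * ((1 / n) * (G.lap g z) ^ 2 + K * G.gamma g g z) ≤ 2 * G.gamma2 g z := by
        linarith
      calc (2 / n) * (G.lap g z) ^ 2 + (2 * K) * G.gamma g g z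
          = 2 * ((1 / n) * (G.lap g z) ^ 2 + K * G.gamma g g z) := by ring
        _ ≤ 2 * G.gamma2 g z := h2
        _ = (2 : ℝ) * G.gamma2 g z := rfl
    have hmono := P_mono G c hc t ht hpoint x
    rw [map_add, map_smul, map_smul] at hmono
    simp only [Pi.add_apply, Pi.smul_apply, smul_eq_mul] at hmono
    -- Jensen + commutation
    have hcomm : G.P t (G.lap g) = G.lap (G.P T f) := by
      have h1 : G.P t (G.lapCLM_s17 g) = G.lapCLM_s17 (G.P t g) := by
        rw [← ContinuousLinearMap.mul_apply, P_comm_lap, ContinuousLinearMap.mul_apply]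
      have h2 : G.P t g = G.P T f := by
        rw [hg, ← ContinuousLinearMap.mul_apply, ← P_add]
        norm_num
      rw [lapCLM_apply] at h1
      rw [h1, h2]
      rfl
    have hjen : C ≤ G.P t (fun u => (G.lap g u) ^ 2) x := by
      have := P_jensen G c hc t ht (G.lap g) x
      rw [hcomm] at this
      exact this
    have : 2 * K * Φ t + (2 / n) * C
        ≤ 2 / n * G.P t (fun u => (G.lap g u) ^ 2) x + 2 * K * G.P t (G.gamma g g) x := by
      have hKn : 0 ≤ 2 / n := by positivity
      have h1 : (2 / n) * C ≤ 2 / n * G.P t (fun u => (G.lap g u) ^ 2) x :=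
        mul_le_mul_of_nonneg_left hjen hKn
      have h2 : Φ t = G.P t (G.gamma g g) x := rfl
      linarith
    linarith
  -- ψ has explicit derivative
  have hψd : ∀ t : ℝ, HasDerivAt ψ
      (Real.exp (-(2 * K * t)) * (G.P t ((2 : ℝ) • G.gamma2 (G.P (T - t) f)) x)
        + (Real.exp (-(2 * K * t)) * (-(2 * K))) * (Φ t + C / (n * K))) t := by
    intro t
    have hexp : HasDerivAt (fun s : ℝ => Real.exp (-(2 * K * s)))
        (Real.exp (-(2 * K * t)) * (-(2 * K))) t := by
      have hid : HasDerivAt (fun s : ℝ => -(2 * K * s)) (-(2 * K)) t := by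
        exact ((hasDerivAt_id t).const_mul (2 * K)).neg.congr_deriv (by ring)
      exact hid.exp
    have hphi := (hasDerivAt_Phi G f T t x).add_const (C / (n * K))
    have := hexp.mul hphi
    refine this.congr_deriv (Eq.symm ?_)
    ring
  -- ψ is monotone on [0, T]
  have hmonot : MonotoneOn ψ (Set.Icc 0 T) := by
    apply monotoneOn_of_deriv_nonneg (convex_Icc 0 T)
    · exact fun t _ => ((hψd t).continuousAt).continuousWithinAt
    · exact fun t _ => ((hψd t).differentiableAt).differentiableWithinAt
    · intro t htmem
      rw [interior_Icc, Set.mem_Ioo] at htmem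
      rw [(hψd t).deriv]
      have hl := hlow t htmem.1.le
      have hepos : 0 < Real.exp (-(2 * K * t)) := Real.exp_pos _
      have hnk : (0:ℝ) < n * K := by positivity
      have hcancel : 2 * K * (C / (n * K)) = (2 / n) * C := by
        field_simp
      nlinarith [mul_le_mul_of_nonneg_left hl hepos.le]
  have hψ0T := hmonot (Set.left_mem_Icc.2 hT.le) (Set.right_mem_Icc.2 hT.le) hT.le
  -- endpoint values
  have hΦ0 : Φ 0 = G.gamma (G.P T f) (G.P T f) x := by
    simp only [hΦ, sub_zero, P_zero, ContinuousLinearMap.one_apply]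
  have hΦT : Φ T ≤ 1 := by
    have hPf : G.P (T - T) f = f := by
      simp only [sub_self, P_zero, ContinuousLinearMap.one_apply]
    have : Φ T = G.P T (G.gamma f f) x := by rw [hΦ]; simp only [hPf]
    rw [this]
    exact P_le_one G c hc T hT.le hf x
  have hψ0 : ψ 0 = G.gamma (G.P T f) (G.P T f) x + C / (n * K) := by
    simp [hψ, hΦ0]
  have hψT : ψ T ≤ Real.exp (-(2 * K * T)) * (1 + C / (n * K)) := by
    have hnk : (0:ℝ) < n * K := by positivity
    have : Φ T + C / (n * K) ≤ 1 + C / (n * K) := by linarith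
    exact mul_le_mul_of_nonneg_left this (Real.exp_pos _).le
  have hkey : G.gamma (G.P T f) (G.P T f) x + C / (n * K)
      ≤ Real.exp (-(2 * K * T)) * (1 + C / (n * K)) := le_trans (hψ0 ▸ hψ0T) hψT
  have hnk : (0:ℝ) < n * K := by positivity
  have hgeorm : 0 ≤ G.gamma (G.P T f) (G.P T f) x := gamma_nonneg G _ x
  have hele : Real.exp (-(2 * K * T)) ≤ 1 := by
    rw [Real.exp_le_one_iff]
    nlinarith
  have hepos : 0 < Real.exp (-(2 * K * T)) := Real.exp_pos _
  have hee : Real.exp (2 * K * T) * Real.exp (-(2 * K * T)) = 1 := by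
    rw [← Real.exp_add]; simp
  constructor
  · nlinarith [div_nonneg hC0 hnk.le]
  · have hCd : C / (n * K) * (1 - Real.exp (-(2 * K * T))) ≤ Real.exp (-(2 * K * T)) := by
      nlinarith
    have hthis := mul_le_mul_of_nonneg_left hCd (le_of_lt (Real.exp_pos (2 * K * T)))
    rw [div_eq_mul_inv] at hthis
    have hE1 : Real.exp (2 * K * T) * (1 - Real.exp (-(2 * K * T)))
        = Real.exp (2 * K * T) - 1 := by rw [mul_sub, hee, mul_one]
    have h2 : C * (n * K)⁻¹ * (Real.exp (2 * K * T) - 1) ≤ 1 := by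
      calc C * (n * K)⁻¹ * (Real.exp (2 * K * T) - 1)
          = Real.exp (2 * K * T) * (C * (n * K)⁻¹ * (1 - Real.exp (-(2 * K * T)))) := by
            rw [← hE1]; ring
        _ ≤ Real.exp (2 * K * T) * Real.exp (-(2 * K * T)) := hthis
        _ = 1 := hee
    have h3 : C * (Real.exp (2 * K * T) - 1)
        = C * (n * K)⁻¹ * (Real.exp (2 * K * T) - 1) * (n * K) := by
      field_simp
    rw [h3]
    calc C * (n * K)⁻¹ * (Real.exp (2 * K * T) - 1) * (n * K) ≤ 1 * (n * K) :=
          mul_le_mul_of_nonneg_right h2 hnk.le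
      _ = n * K := one_mul _
  
end Core

section Osc
variable [Fintype V] (G : WGraph V)

lemma hasDerivAt_P_coord (f : V → ℝ) (t : ℝ) (z : V) :
    HasDerivAt (fun s : ℝ => G.P s f z) (G.lap (G.P t f) z) t :=
  hasDerivAt_pi.1 (hasDerivAt_P G f t) z

lemma osc_step (c : ℝ) (hc : ∀ x, G.deg x ≤ c) (K n : ℝ) (hK : 0 < K) (hn : 0 < n)
    (hCD : ∀ (f : V → ℝ) (x : V),
      (1 / n) * (G.lap f x) ^ 2 + K * G.gamma f f x ≤ G.gamma2 f x)
    (f : V → ℝ) (hf : ∀ z, G.gamma f f z ≤ 1) (T : ℝ) (hT : 0 < T) (x y : V) :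
    f y - f x ≤ Real.pi * Real.sqrt (n * K) / K + (G.P T f y - G.P T f x) := by
  set H : ℝ → ℝ := fun t => (G.P t f y - G.P t f x)
    - (2 * Real.sqrt (n * K) / K) * Real.arcsin (Real.exp (-(K * t))) with hHdef
  -- derivative of H for t > 0
  have hH' : ∀ t : ℝ, 0 < t → HasDerivAt H
      ((G.lap (G.P t f) y - G.lap (G.P t f) x)
        + 2 * Real.sqrt (n * K) * (Real.exp (-(K * t))
          / Real.sqrt (1 - Real.exp (-(K * t)) ^ 2))) t := by
    intro t ht
    have ha1 : Real.exp (-(K * t)) < 1 := by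
      rw [Real.exp_lt_one_iff]
      nlinarith
    have ha0 : 0 < Real.exp (-(K * t)) := Real.exp_pos _
    have hexp : HasDerivAt (fun s : ℝ => Real.exp (-(K * s)))
        (Real.exp (-(K * t)) * (-K)) t := by
      have hid : HasDerivAt (fun s : ℝ => -(K * s)) (-K) t := by
        exact ((hasDerivAt_id t).const_mul K).neg.congr_deriv (by ring)
      exact hid.exp
    have harc : HasDerivAt (fun s : ℝ => Real.arcsin (Real.exp (-(K * s))))
        ((1 / Real.sqrt (1 - Real.exp (-(K * t)) ^ 2)) * (Real.exp (-(K * t)) * (-K))) t := by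
      have h1 : Real.exp (-(K * t)) ≠ -1 := by linarith
      have h2 : Real.exp (-(K * t)) ≠ 1 := ne_of_lt ha1
      exact (Real.hasDerivAt_arcsin h1 h2).comp t hexp
    have hmain := ((hasDerivAt_P_coord G f t y).sub (hasDerivAt_P_coord G f t x)).sub
      (harc.const_mul (2 * Real.sqrt (n * K) / K))
    have hKne : K ≠ 0 := hK.ne'
    have hs : Real.sqrt (1 - Real.exp (-(K * t)) ^ 2) ≠ 0 := by
      have h0 : (0:ℝ) < 1 - Real.exp (-(K * t)) ^ 2 := by nlinarith
      positivity
    refine hmain.congr_deriv (Eq.symm ?_)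
    field_simp
    ring
  -- continuity of H
  have hcontH : Continuous H := by
    have h1 : Continuous fun t : ℝ => G.P t f y := by
      rw [continuous_iff_continuousAt]
      exact fun t => (hasDerivAt_P_coord G f t y).differentiableAt.continuousAt
    have h2 : Continuous fun t : ℝ => G.P t f x := by
      rw [continuous_iff_continuousAt]
      exact fun t => (hasDerivAt_P_coord G f t x).differentiableAt.continuousAt
    have h3 : Continuous fun t : ℝ => Real.arcsin (Real.exp (-(K * t))) :=
      Real.continuous_arcsin.comp (Real.continuous_exp.comp (continuous_const.mul continuous_id).neg)
    exact (h1.sub h2).sub (continuous_const.mul h3)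
  -- derivative nonnegativity
  have hderiv_nonneg : ∀ t ∈ Set.Ioo (0:ℝ) T, 0 ≤ deriv H t := by
    intro t htmem
    obtain ⟨ht0, htT⟩ := htmem
    rw [(hH' t ht0).deriv]
    set a : ℝ := Real.exp (-(K * t)) with ha
    have ha0 : 0 < a := Real.exp_pos _
    have ha1 : a < 1 := by rw [ha, Real.exp_lt_one_iff]; nlinarith
    have hE1 : 1 < Real.exp (2 * K * t) := by rw [Real.one_lt_exp_iff]; nlinarith
    set E : ℝ := Real.exp (2 * K * t) with hE
    have hEm1 : 0 < E - 1 := by linarith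
    have hsE : 0 < Real.sqrt (E - 1) := Real.sqrt_pos.2 hEm1
    have haE : a ^ 2 * E = 1 := by
      rw [ha, hE, sq, ← Real.exp_add, ← Real.exp_add, ← Real.exp_zero]
      congr 1; ring
    have h1a : 1 - a ^ 2 = a ^ 2 * (E - 1) := by nlinarith
    have hsqrt : Real.sqrt (1 - a ^ 2) = a * Real.sqrt (E - 1) := by
      rw [h1a, Real.sqrt_mul (sq_nonneg a), Real.sqrt_sq ha0.le]
    have hfrac : a / Real.sqrt (1 - a ^ 2) = 1 / Real.sqrt (E - 1) := by
      rw [hsqrt]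
      field_simp
    have hbound : ∀ z, |G.lap (G.P t f) z| ≤ Real.sqrt (n * K) / Real.sqrt (E - 1) := by
      intro z
      have hcore := (core_est G c hc K n hK hn hCD f hf t ht0 z).2
      have h2 : (G.lap (G.P t f) z) ^ 2 ≤ (Real.sqrt (n * K) / Real.sqrt (E - 1)) ^ 2 := by
        rw [div_pow, Real.sq_sqrt (by positivity : (0:ℝ) ≤ n * K), Real.sq_sqrt hEm1.le,
          le_div_iff₀ hEm1]
        exact hcore
      have h3 : |G.lap (G.P t f) z| = Real.sqrt ((G.lap (G.P t f) z) ^ 2) :=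
        (Real.sqrt_sq_eq_abs _).symm
      rw [h3]
      calc Real.sqrt ((G.lap (G.P t f) z) ^ 2)
          ≤ Real.sqrt ((Real.sqrt (n * K) / Real.sqrt (E - 1)) ^ 2) := Real.sqrt_le_sqrt h2
        _ = |Real.sqrt (n * K) / Real.sqrt (E - 1)| := Real.sqrt_sq_eq_abs _
        _ = Real.sqrt (n * K) / Real.sqrt (E - 1) := abs_of_nonneg (by positivity)
    have hby := hbound y
    have hbx := hbound x
    rw [abs_le] at hby hbx
    rw [hfrac]
    have hrw : 2 * Real.sqrt (n * K) * (1 / Real.sqrt (E - 1))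
        = 2 * (Real.sqrt (n * K) / Real.sqrt (E - 1)) := by ring
    rw [hrw]
    linarith
  -- монotonicity on [0,T]
  have hmono : MonotoneOn H (Set.Icc 0 T) := by
    apply monotoneOn_of_deriv_nonneg (convex_Icc 0 T) hcontH.continuousOn
    · intro t htm
      rw [interior_Icc] at htm
      exact (hH' t htm.1).differentiableAt.differentiableWithinAt
    · intro t htm
      rw [interior_Icc] at htm
      exact hderiv_nonneg t htm
  have h0T : H 0 ≤ H T := hmono (Set.left_mem_Icc.2 hT.le) (Set.right_mem_Icc.2 hT.le) hT.le
  have hH0 : H 0 = (f y - f x) - (2 * Real.sqrt (n * K) / K) * (Real.pi / 2) := by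
    simp only [hHdef, P_zero, ContinuousLinearMap.one_apply, mul_zero, neg_zero,
      Real.exp_zero, Real.arcsin_one]
  have hHT : H T ≤ G.P T f y - G.P T f x := by
    have harcpos : 0 ≤ Real.arcsin (Real.exp (-(K * T))) :=
      Real.arcsin_nonneg.2 (Real.exp_pos _).le
    have hcoef : 0 ≤ 2 * Real.sqrt (n * K) / K := by positivity
    simp only [hHdef]
    nlinarith
  have hfinal : (f y - f x) - (2 * Real.sqrt (n * K) / K) * (Real.pi / 2)
      ≤ G.P T f y - G.P T f x := by
    rw [← hH0]; exact le_trans h0T hHT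
  have : (2 * Real.sqrt (n * K) / K) * (Real.pi / 2) = Real.pi * Real.sqrt (n * K) / K := by
    ring
  linarith [hfinal, this.symm.le]

end Osc

section Sup
variable [Fintype V] (G : WGraph V)

lemma rho_bound (c : ℝ) (hc : ∀ x, G.deg x ≤ c) (K n : ℝ) (hK : 0 < K) (hn : 0 < n)
    (hCD : ∀ (f : V → ℝ) (x : V),
      (1 / n) * (G.lap f x) ^ 2 + K * G.gamma f f x ≤ G.gamma2 f x)
    (hconn : G.Connected) (x y : V)
    (g : V → ℝ) (hg : ∀ z, G.gamma g g z ≤ 1) :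
    g y - g x ≤ Real.pi * Real.sqrt (n * K) / K := by
  set Q : ℝ := Real.pi * Real.sqrt (n * K) / K with hQdef
  have hQ0 : 0 ≤ Q := by
    rw [hQdef]
    positivity
  set Sset : Set ℝ := {r | ∃ g : V → ℝ, (∀ z, G.gamma g g z ≤ 1) ∧ r = g y - g x} with hSset
  have hzero_mem : (0 : ℝ) ∈ Sset := by
    refine ⟨0, fun z => ?_, by simp⟩
    rw [gamma_self_eq_sum]
    simp
  have hne : Sset.Nonempty := ⟨0, hzero_mem⟩
  have hbdd : BddAbove Sset := by
    obtain ⟨N, cpath, hc0, hcN, hedge⟩ := hconn x y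
    refine ⟨∑ i ∈ Finset.range N, Real.sqrt (2 * G.m (cpath i) / G.w (cpath i) (cpath (i+1))),
      fun r hr => ?_⟩
    obtain ⟨u, hu, rfl⟩ := hr
    have htel : u y - u x = ∑ i ∈ Finset.range N, (u (cpath (i+1)) - u (cpath i)) := by
      rw [Finset.sum_range_sub (fun i => u (cpath i)) N, hc0, hcN]
    rw [htel]
    refine Finset.sum_le_sum fun i hi => ?_
    rw [Finset.mem_range] at hi
    have hwi := hedge i hi
    have hsq := edge_bound G hu hwi
    calc u (cpath (i+1)) - u (cpath i) ≤ |u (cpath (i+1)) - u (cpath i)| := le_abs_self _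
      _ = Real.sqrt ((u (cpath (i+1)) - u (cpath i)) ^ 2) := (Real.sqrt_sq_eq_abs _).symm
      _ ≤ Real.sqrt (2 * G.m (cpath i) / G.w (cpath i) (cpath (i+1))) := Real.sqrt_le_sqrt hsq
  set S : ℝ := sSup Sset with hSdef
  have hstep : ∀ T : ℝ, 0 < T → S ≤ Q + Real.exp (-(K * T)) * S := by
    intro T hT
    refine csSup_le hne fun r hr => ?_
    obtain ⟨u, hu, rfl⟩ := hr
    have hosc := osc_step G c hc K n hK hn hCD u hu T hT x y
    set h : V → ℝ := Real.exp (K * T) • (G.P T u) with hhdef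
    have hhgam : ∀ z, G.gamma h h z ≤ 1 := by
      intro z
      rw [hhdef, gamma_smul]
      have hcore := (core_est G c hc K n hK hn hCD u hu T hT z).1
      have hsq : Real.exp (K * T) ^ 2 = Real.exp (2 * K * T) := by
        rw [sq, ← Real.exp_add]; congr 1; ring
      rw [hsq]
      have := mul_le_mul_of_nonneg_left hcore (Real.exp_pos (2 * K * T)).le
      calc Real.exp (2 * K * T) * G.gamma (G.P T u) (G.P T u) z
          ≤ Real.exp (2 * K * T) * Real.exp (-(2 * K * T)) := this
        _ = 1 := by rw [← Real.exp_add]; simp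
    have hmem : h y - h x ∈ Sset := ⟨h, hhgam, rfl⟩
    have hle : h y - h x ≤ S := le_csSup hbdd hmem
    have hPT : G.P T u y - G.P T u x = Real.exp (-(K * T)) * (h y - h x) := by
      rw [hhdef]
      simp only [Pi.smul_apply, smul_eq_mul]
      rw [← mul_sub, ← mul_assoc, ← Real.exp_add]
      simp
    have : G.P T u y - G.P T u x ≤ Real.exp (-(K * T)) * S := by
      rw [hPT]
      exact mul_le_mul_of_nonneg_left hle (Real.exp_pos _).le
    linarith
  have hSQ : S ≤ Q := by
    by_contra hcon
    push_neg at hcon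
    have hSQpos : 0 < S - Q := by linarith
    have hSpos : 0 < S := by linarith
    set T : ℝ := Real.log (S / (S - Q)) / K + 1 / K with hTdef
    have hrat : 1 ≤ S / (S - Q) := by
      rw [le_div_iff₀ hSQpos]
      linarith
    have hlogpos : 0 ≤ Real.log (S / (S - Q)) := Real.log_nonneg hrat
    have hTpos : 0 < T := by
      rw [hTdef]
      have : 0 < 1 / K := by positivity
      have h2 : 0 ≤ Real.log (S / (S - Q)) / K := by positivity
      linarith
    have hexpT : Real.exp (-(K * T)) = (S - Q) / S * Real.exp (-1) := by
      rw [hTdef]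
      have hKne : K ≠ 0 := hK.ne'
      have : -(K * (Real.log (S / (S - Q)) / K + 1 / K))
          = -Real.log (S / (S - Q)) + -1 := by field_simp; ring
      rw [this, Real.exp_add, Real.exp_neg, Real.exp_log (by positivity)]
      rw [inv_div]
    have hlt : Real.exp (-(K * T)) * S < S - Q := by
      rw [hexpT]
      have he1 : Real.exp (-1 : ℝ) < 1 := by
        rw [Real.exp_lt_one_iff]; norm_num
      have hSne : S ≠ 0 := hSpos.ne'
      calc (S - Q) / S * Real.exp (-1) * S = (S - Q) * Real.exp (-1) := by field_simp
        _ < (S - Q) * 1 := mul_lt_mul_of_pos_left he1 hSQpos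
        _ = S - Q := mul_one _
    have := hstep T hTpos
    linarith
  have hgS : g y - g x ≤ S := le_csSup hbdd ⟨g, hg, rfl⟩
  linarith

end Sup

/-- finite connected graph, CD(K,n), K>0, n<∞ ⟹ diam_d ≤ π√(𝔇n/(2K)). -/
theorem diamd_le_of_CDn (G : WGraph V) [Fintype V] [Nonempty V]
    (hconn : G.Connected) (K n D : ℝ) (hK : 0 < K) (hn : 0 < n)
    (hD : IsLUB (Set.range G.deg) D)
    (hCD : ∀ (f : V → ℝ) (x : V),
      (1 / n) * (G.lap f x) ^ 2 + K * G.gamma f f x ≤ G.gamma2 f x) :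
    G.diamd ≤ ENNReal.ofReal (Real.pi * Real.sqrt (D * n / (2 * K))) := by
  have hc : ∀ u, G.deg u ≤ D := fun u => hD.1 ⟨u, rfl⟩
  have hdeg0 : ∀ u, 0 ≤ G.deg u := by
    intro u
    rw [deg_eq_sum]
    exact div_nonneg (Finset.sum_nonneg fun v _ => G.nonneg u v) (G.mpos u).le
  have hD0 : 0 ≤ D := le_trans (hdeg0 (Classical.arbitrary V)) (hc _)
  rw [WGraph.diamd]
  refine iSup_le fun x => iSup_le fun y => ?_
  by_cases hDpos : 0 < D
  · -- main case
    set dset : V → Set ℕ := fun z =>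
      {nn : ℕ | ∃ cc : ℕ → V, cc 0 = x ∧ cc nn = z ∧ ∀ i < nn, 0 < G.w (cc i) (cc (i+1))}
      with hdset
    have hdne : ∀ z, (dset z).Nonempty := by
      intro z
      obtain ⟨N, cc, h1, h2, h3⟩ := hconn x z
      exact ⟨N, cc, h1, h2, h3⟩
    set dx : V → ℕ := fun z => sInf (dset z) with hdx
    have hspec : ∀ z, dx z ∈ dset z := fun z => Nat.sInf_mem (hdne z)
    have hdx_x : dx x = 0 := by
      have h0mem : (0 : ℕ) ∈ dset x := ⟨fun _ => x, rfl, rfl, fun i hi => by omega⟩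
      exact Nat.le_zero.1 (Nat.sInf_le h0mem)
    have hlip : ∀ u v, 0 < G.w u v → dx v ≤ dx u + 1 := by
      intro u v huv
      obtain ⟨cc, hc0, hcN, hedge⟩ := hspec u
      set N := dx u
      have hmem : N + 1 ∈ dset v := by
        refine ⟨fun i => if i < N + 1 then cc i else v, ?_, ?_, ?_⟩
        · simp [Nat.zero_lt_succ, hc0]
        · simp
        · intro i hi
          rcases Nat.lt_or_ge i N with h | h
          · have h1 : i < N + 1 := by omega
            have h2 : i + 1 < N + 1 := by omega
            simpa [h1, h2] using hedge i h
          · have hiN : i = N := by omega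
            have h1 : i < N + 1 := by omega
            have h2 : ¬ (i + 1 < N + 1) := by omega
            simp only [h1, if_pos, h2, if_neg]
            have hcu : cc i = u := by rw [hiN, hcN]
            rw [hcu]
            exact huv
      exact Nat.sInf_le hmem
    set b : ℝ := Real.sqrt (2 / D) with hb
    have hb2 : b ^ 2 = 2 / D := Real.sq_sqrt (by positivity)
    have hbpos : 0 < b := Real.sqrt_pos.2 (by positivity)
    set f₀ : V → ℝ := fun z => b * (dx z : ℝ) with hf₀
    have hgam : ∀ z, G.gamma f₀ f₀ z ≤ 1 := by
      intro z
      rw [gamma_self_eq_sum]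
      have hterm : ∀ v, G.w z v * (f₀ v - f₀ z) ^ 2 ≤ G.w z v * b ^ 2 := by
        intro v
        rcases lt_or_ge 0 (G.w z v) with hw | hw
        · have h1 : dx v ≤ dx z + 1 := hlip z v hw
          have h2 : dx z ≤ dx v + 1 := by
            apply hlip v z
            rw [G.symm]
            exact hw
          have hdiff : ((dx v : ℝ) - (dx z : ℝ)) ^ 2 ≤ 1 := by
            have c1 : (dx v : ℝ) ≤ (dx z : ℝ) + 1 := by exact_mod_cast h1
            have c2 : (dx z : ℝ) ≤ (dx v : ℝ) + 1 := by exact_mod_cast h2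
            nlinarith
          have : (f₀ v - f₀ z) ^ 2 = b ^ 2 * ((dx v : ℝ) - (dx z : ℝ)) ^ 2 := by
            rw [hf₀]; ring
          rw [this]
          calc G.w z v * (b ^ 2 * ((dx v : ℝ) - (dx z : ℝ)) ^ 2)
              ≤ G.w z v * (b ^ 2 * 1) :=
                mul_le_mul_of_nonneg_left
                  (mul_le_mul_of_nonneg_left hdiff (by positivity)) (G.nonneg z v)
            _ = G.w z v * b ^ 2 := by ring
        · have hw0 : G.w z v = 0 := le_antisymm hw (G.nonneg z v)
          rw [hw0]
          simp
      have hsum : ∑ v, G.w z v * (f₀ v - f₀ z) ^ 2 ≤ (∑ v, G.w z v) * b ^ 2 := by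
        rw [Finset.sum_mul]
        exact Finset.sum_le_sum fun v _ => hterm v
      have hm := G.mpos z
      have hdegz : (∑ v, G.w z v) / G.m z ≤ D := by
        rw [← deg_eq_sum]
        exact hc z
      calc (1 / (2 * G.m z)) * ∑ v, G.w z v * (f₀ v - f₀ z) ^ 2
          ≤ (1 / (2 * G.m z)) * ((∑ v, G.w z v) * b ^ 2) :=
            mul_le_mul_of_nonneg_left hsum (by positivity)
        _ = ((∑ v, G.w z v) / G.m z) * b ^ 2 / 2 := by
            have hmne : G.m z ≠ 0 := hm.ne'
            field_simp
        _ ≤ D * b ^ 2 / 2 := by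
            have hb2pos : 0 ≤ b ^ 2 := sq_nonneg b
            nlinarith
        _ = 1 := by rw [hb2]; field_simp
    have hrho := rho_bound G D hc K n hK hn hCD hconn x y f₀ hgam
    have hfx : f₀ x = 0 := by rw [hf₀]; simp [hdx_x]
    have hkey : b * (dx y : ℝ) ≤ Real.pi * Real.sqrt (n * K) / K := by
      have : f₀ y - f₀ x = b * (dx y : ℝ) := by rw [hfx, hf₀]; ring
      linarith [hrho, this.symm.le]
    -- convert to the target bound
    have hsq_eq : Real.sqrt (D * n / (2 * K)) = Real.sqrt (n * K) / (K * b) := by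
      have h1 : (Real.sqrt (n * K) / (K * b)) ^ 2 = D * n / (2 * K) := by
        rw [div_pow, Real.sq_sqrt (by positivity : (0:ℝ) ≤ n * K), mul_pow, hb2]
        field_simp
      rw [← h1, Real.sqrt_sq (by positivity)]
    have hdxy : (dx y : ℝ) ≤ Real.pi * Real.sqrt (D * n / (2 * K)) := by
      rw [hsq_eq]
      have h1 : (dx y : ℝ) ≤ Real.pi * Real.sqrt (n * K) / K / b := by
        rw [le_div_iff₀ hbpos]
        linarith [hkey]
      calc (dx y : ℝ) ≤ Real.pi * Real.sqrt (n * K) / K / b := h1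
        _ = Real.pi * (Real.sqrt (n * K) / (K * b)) := by field_simp
    -- cdist x y ≤ dx y
    have hcd : G.cdist x y ≤ (dx y : ℕ∞) := by
      rw [WGraph.cdist]
      exact iInf₂_le (dx y) (hspec y)
    calc (G.cdist x y : ℝ≥0∞) ≤ ((dx y : ℕ∞) : ℝ≥0∞) := by
          exact_mod_cast hcd
      _ = ((dx y : ℕ) : ℝ≥0∞) := by simp
      _ = ENNReal.ofReal ((dx y : ℕ) : ℝ) := (ENNReal.ofReal_natCast _).symm
      _ ≤ ENNReal.ofReal (Real.pi * Real.sqrt (D * n / (2 * K))) :=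
          ENNReal.ofReal_le_ofReal hdxy
  · -- degenerate case: D = 0
    have hDeq : D = 0 := le_antisymm (not_lt.1 hDpos) hD0
    have hwzero : ∀ u v, G.w u v = 0 := by
      intro u v
      have hdu := hc u
      rw [deg_eq_sum, hDeq] at hdu
      have hm := G.mpos u
      have hsum0 : ∑ z, G.w u z ≤ 0 := by
        by_contra hpos
        push_neg at hpos
        have : 0 < (∑ z, G.w u z) / G.m u := div_pos hpos hm
        linarith
      have heq : ∑ z, G.w u z = 0 :=
        le_antisymm hsum0 (Finset.sum_nonneg fun z _ => G.nonneg u z)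
      have := (Finset.sum_eq_zero_iff_of_nonneg fun z _ => G.nonneg u z).1 heq v
        (Finset.mem_univ v)
      exact this
    obtain ⟨N, cc, hc0, hcN, hedge⟩ := hconn x y
    have hN : N = 0 := by
      by_contra hNne
      have := hedge 0 (Nat.pos_of_ne_zero hNne)
      rw [hwzero] at this
      exact lt_irrefl 0 this
    subst hN
    have hcd : G.cdist x y ≤ (0 : ℕ∞) := by
      rw [WGraph.cdist]
      exact iInf₂_le 0 ⟨cc, hc0, hcN, hedge⟩
    have : G.cdist x y = 0 := le_antisymm hcd zero_le
    rw [this]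
    simp
end
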